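/- For N = 2^n and indices i, k with G_N(k,i) = 1, the support of row i of G_N is contained in the support of row k of G_N (i.e., G_N^{(i)}(j) = 1 implies G_N^{(k)}(j) = 1 for all j). -/

import Mathlib

def G2 : Matrix (Fin 2) (Fin 2) (ZMod 2) := !![1,0;1,1]

def Gmat : (n : ℕ) → Matrix (Fin (2^n)) (Fin (2^n)) (ZMod 2)
  | 0 => 1
  | n+1 =>
    Matrix.reindex (finProdFinEquiv.trans (finCongr (by rw [pow_succ, Nat.mul_comm])))
      (finProdFinEquiv.trans (finCongr (by rw [pow_succ, Nat.mul_comm])))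
      (Matrix.kroneckerMap (· * ·) G2 (Gmat n))

def bitRev : ℕ → ℕ → ℕ
  | 0, _ => 0
  | n+1, i => 2^n * (i % 2) + bitRev n (i / 2)

theorem bitRev_lt (n i : ℕ) : bitRev n i < 2^n := by
  induction n generalizing i with
  | zero => simp [bitRev]
  | succ n ih =>
    have h1 : i % 2 < 2 := Nat.mod_lt _ (by norm_num)
    have h2 := ih (i / 2)
    have h3 : 2^n * (i % 2) ≤ 2^n := by
      calc 2^n * (i % 2) ≤ 2^n * 1 := Nat.mul_le_mul_left _ (by omega)
        _ = 2^n := by omega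
    have h4 : 2^(n+1) = 2^n * 2 := pow_succ 2 n
    simp only [bitRev]
    omega

def bitRevFin (n : ℕ) (i : Fin (2^n)) : Fin (2^n) := ⟨bitRev n i.val, bitRev_lt n i.val⟩

def bitRevVec (n : ℕ) (P : Fin (2^n) → Bool) : Fin (2^n) → Bool :=
  fun i => P (bitRevFin n i)

def elemPerm (j k i : ℕ) : ℕ :=
  if i < k ∨ k + 2^(j+1) ≤ i then i
  else if i < k + 2^j then i + 2^j
  else i - 2^j

def elemPermVec (n j k : ℕ) (P : Fin (2^n) → Bool) : Fin (2^n) → Bool :=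
  fun i => P ⟨elemPerm j k i.val % 2^n, Nat.mod_lt _ (Nat.two_pow_pos n)⟩

def ElemValid (n j k : ℕ) : Prop := j + 1 ≤ n ∧ 2^(j+1) ∣ k ∧ k < 2^n

def wt {m : ℕ} (P : Fin m → Bool) : ℕ := (Finset.univ.filter fun i => P i = true).card

def IsRowUnion (n : ℕ) (P : Fin (2^n) → Bool) : Prop :=
  ∃ L : Finset (Fin (2^n)), L.Nonempty ∧ ∀ j, P j = true ↔ ∃ i ∈ L, Gmat n i j = 1

def blockLt (n j k : ℕ) (P : Fin (2^n) → Bool) : Prop :=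
  ∃ t < 2^j,
    (∀ s < t, P ⟨(k+s) % 2^n, Nat.mod_lt _ (Nat.two_pow_pos n)⟩
              = P ⟨(k+2^j+s) % 2^n, Nat.mod_lt _ (Nat.two_pow_pos n)⟩) ∧
    P ⟨(k+t) % 2^n, Nat.mod_lt _ (Nat.two_pow_pos n)⟩ = false ∧
    P ⟨(k+2^j+t) % 2^n, Nat.mod_lt _ (Nat.two_pow_pos n)⟩ = true

instance (n j k : ℕ) (P : Fin (2^n) → Bool) : Decidable (blockLt n j k P) := by
  unfold blockLt; infer_instance

def algPhi (n : ℕ) (P : Fin (2^n) → Bool) : Fin (2^n) → Bool :=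
  (List.range n).foldl (fun Q j =>
    (List.range (2^(n-j-1))).foldl (fun R m =>
      if blockLt n j (m * 2^(j+1)) R then elemPermVec n j (m * 2^(j+1)) R else R) Q) P

def Pplus (n : ℕ) (P : Fin (2^(n+1)) → Bool) : Fin (2^n) → Bool :=
  fun m => P ⟨2*m.val, by have := m.isLt; have h : 2^(n+1) = 2^n*2 := pow_succ 2 n; omega⟩
        || P ⟨2*m.val+1, by have := m.isLt; have h : 2^(n+1) = 2^n*2 := pow_succ 2 n; omega⟩

def Pminus (n : ℕ) (P : Fin (2^(n+1)) → Bool) : Fin (2^n) → Bool :=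
  fun m => P ⟨2*m.val, by have := m.isLt; have h : 2^(n+1) = 2^n*2 := pow_succ 2 n; omega⟩
        && P ⟨2*m.val+1, by have := m.isLt; have h : 2^(n+1) = 2^n*2 := pow_succ 2 n; omega⟩

def eraseMap : (n : ℕ) → (Fin (2^n) → Bool) → Fin (2^n) → Bool
  | 0, P => P
  | n+1, P => fun i =>
      if h : i.val < 2^n then eraseMap n (Pplus n P) ⟨i.val, h⟩
      else eraseMap n (Pminus n P)
        ⟨i.val - 2^n, by have := i.isLt; have h2 : 2^(n+1) = 2^n*2 := pow_succ 2 n; omega⟩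

def lowHalf (n : ℕ) (P : Fin (2^(n+1)) → Bool) : Fin (2^n) → Bool :=
  fun i => P ⟨i.val, by have := i.isLt; have h : 2^(n+1) = 2^n*2 := pow_succ 2 n; omega⟩

def highHalf (n : ℕ) (P : Fin (2^(n+1)) → Bool) : Fin (2^n) → Bool :=
  fun i => P ⟨2^n + i.val, by have := i.isLt; have h : 2^(n+1) = 2^n*2 := pow_succ 2 n; omega⟩

def lexLT {m : ℕ} (A B : Fin m → Bool) : Prop :=
  ∃ k, (∀ i, i < k → A i = B i) ∧ A k = false ∧ B k = true

def PatEquiv (n : ℕ) (P P' : Fin (2^n) → Bool) : Prop :=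
  ∃ L : List (ℕ × ℕ), (∀ p ∈ L, ElemValid n p.1 p.2) ∧
    P' = bitRevVec n (L.foldl (fun Q p => elemPermVec n p.1 p.2 Q) (bitRevVec n P))

lemma div_bound (n : ℕ) (r : Fin (2^(n+1))) : r.val / 2^n < 2 :=
  Nat.div_lt_of_lt_mul (by have := r.isLt; have h : 2^(n+1) = 2^n*2 := pow_succ 2 n; omega)

lemma Gmat_succ_apply (n : ℕ) (r c : Fin (2^(n+1))) :
    Gmat (n+1) r c = G2 ⟨r.val / 2^n, div_bound n r⟩ ⟨c.val / 2^n, div_bound n c⟩ *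
      Gmat n ⟨r.val % 2^n, Nat.mod_lt _ (Nat.two_pow_pos n)⟩
             ⟨c.val % 2^n, Nat.mod_lt _ (Nat.two_pow_pos n)⟩ := by
  simp [Gmat, Matrix.reindex_apply, Matrix.submatrix_apply, Equiv.symm_trans_apply,
    Matrix.kroneckerMap_apply, finCongr_symm, finCongr_apply, Fin.divNat, Fin.modNat]

lemma zmod_mul_eq_one {a b : ZMod 2} (h : a * b = 1) : a = 1 ∧ b = 1 := by
  revert h; revert a b; decide

lemma G2_trans : ∀ a b c : Fin 2, G2 a b = 1 → G2 b c = 1 → G2 a c = 1 := by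
  intro a b c; fin_cases a <;> fin_cases b <;> fin_cases c <;> simp [G2]

/-- if G_N(k,i) = 1 then the support of row i is contained in the
support of row k. -/
theorem stmt4 (n : ℕ) (i k : Fin (2^n)) (hki : Gmat n k i = 1) :
    ∀ j : Fin (2^n), Gmat n i j = 1 → Gmat n k j = 1 := by
  induction n with
  | zero =>
    intro j _
    have : k = j := by omega
    subst this
    simp [Gmat, Matrix.one_apply]
  | succ n ih =>
    intro j hij
    rw [Gmat_succ_apply] at hki hij ⊢
    obtain ⟨h1, h2⟩ := zmod_mul_eq_one hki
    obtain ⟨h3, h4⟩ := zmod_mul_eq_one hij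
    rw [G2_trans _ _ _ h1 h3, ih _ _ h2 _ h4]
    norm_num
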